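/- For n ≥ 3, if G is the (n-1)-regular bipartite graph with parts {x_1,...,x_n} and {y_1,...,y_n} and edges x_i y_j for i ≠ j (the complete bipartite graph K_{n,n} minus a perfect matching), then the metric dimension of G equals n-1. -/

import Mathlib

/-- `W` resolves `G`: every vertex is determined by its distance vector to `W`. -/
def Resolves {V : Type*} (G : SimpleGraph V) (W : Set V) : Prop :=
  ∀ u v : V, (∀ w ∈ W, G.dist u w = G.dist v w) → u = v

/-- Metric dimension: minimum cardinality of a (finite) resolving set. -/
noncomputable def metricDim {V : Type*} (G : SimpleGraph V) : ℕ :=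
  sInf {k | ∃ W : Set V, W.Finite ∧ W.ncard = k ∧ Resolves G W}

/-- `K_{n,n}` minus a perfect matching: parts `inl i` (the xᵢ) and `inr j` (the yⱼ),
with `xᵢ ~ yⱼ` iff `i ≠ j`. -/
def matchGraph (n : ℕ) : SimpleGraph (Fin n ⊕ Fin n) where
  Adj u v := match u, v with
    | Sum.inl i, Sum.inr j => i ≠ j
    | Sum.inr j, Sum.inl i => i ≠ j
    | _, _ => False
  symm := ⟨by rintro (i|i) (j|j) h <;> exact h⟩
  loopless := ⟨by rintro (i|i) h <;> exact h⟩

section MGaux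
open SimpleGraph Sum
variable {n : ℕ}

lemma mg_adj_lr {i j : Fin n} (h : i ≠ j) : (matchGraph n).Adj (inl i) (inr j) := h
lemma mg_adj_rl {i j : Fin n} (h : i ≠ j) : (matchGraph n).Adj (inr j) (inl i) := h

def mgPar : Fin n ⊕ Fin n → ZMod 2 := Sum.elim (fun _ => 0) (fun _ => 1)

lemma mg_adj_par {u v : Fin n ⊕ Fin n} (h : (matchGraph n).Adj u v) :
    mgPar v = mgPar u + 1 := by
  cases u <;> cases v <;> simp [matchGraph, mgPar] at h ⊢ <;> decide

lemma mg_walk_par {u v : Fin n ⊕ Fin n} (p : (matchGraph n).Walk u v) :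
    (p.length : ZMod 2) = mgPar v - mgPar u := by
  induction p with
  | nil => simp
  | cons h p ih =>
    rw [SimpleGraph.Walk.length_cons]
    push_cast
    rw [ih, mg_adj_par h]
    ring

lemma exists_third (hn : 3 ≤ n) (i j : Fin n) : ∃ k : Fin n, k ≠ i ∧ k ≠ j := by
  have h : ({i, j} : Finset (Fin n)).card < Fintype.card (Fin n) := by
    calc ({i, j} : Finset (Fin n)).card ≤ 2 := Finset.card_insert_le _ _ |>.trans (by simp)
    _ < n := by omega
    _ = Fintype.card (Fin n) := by simp
  have h2 : (({i, j} : Finset (Fin n))ᶜ).Nonempty := by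
    rw [← Finset.card_pos, Finset.card_compl]
    omega
  obtain ⟨k, hk⟩ := h2
  simp only [Finset.mem_compl, Finset.mem_insert, Finset.mem_singleton, not_or] at hk
  exact ⟨k, hk.1, hk.2⟩


lemma mg_dist_lr {i j : Fin n} (h : i ≠ j) :
    (matchGraph n).dist (inl i) (inr j) = 1 :=
  SimpleGraph.dist_eq_one_iff_adj.mpr (mg_adj_lr h)

lemma mg_dist_ll (hn : 3 ≤ n) {i j : Fin n} (h : i ≠ j) :
    (matchGraph n).dist (inl i) (inl j) = 2 := by
  obtain ⟨k, hki, hkj⟩ := exists_third hn i j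
  let p : (matchGraph n).Walk (inl i) (inl j) :=
    .cons (mg_adj_lr hki.symm) (.cons (mg_adj_rl hkj.symm) .nil)
  have hle : (matchGraph n).dist (inl i) (inl j) ≤ 2 := by simpa [p] using SimpleGraph.dist_le p
  have h0 : (matchGraph n).dist (inl i) (inl j) ≠ 0 :=
    SimpleGraph.dist_ne_zero_iff_ne_and_reachable.mpr ⟨by simpa using h, ⟨p⟩⟩
  have h1 : (matchGraph n).dist (inl i) (inl j) ≠ 1 := by
    intro hc
    exact (SimpleGraph.dist_eq_one_iff_adj.mp hc)
  omega

lemma mg_dist_rr (hn : 3 ≤ n) {i j : Fin n} (h : i ≠ j) :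
    (matchGraph n).dist (inr i) (inr j) = 2 := by
  obtain ⟨k, hki, hkj⟩ := exists_third hn i j
  let p : (matchGraph n).Walk (inr i) (inr j) :=
    .cons (mg_adj_rl hki) (.cons (mg_adj_lr hkj) .nil)
  have hle : (matchGraph n).dist (inr i) (inr j) ≤ 2 := by simpa [p] using SimpleGraph.dist_le p
  have h0 : (matchGraph n).dist (inr i) (inr j) ≠ 0 :=
    SimpleGraph.dist_ne_zero_iff_ne_and_reachable.mpr ⟨by simpa using h, ⟨p⟩⟩
  have h1 : (matchGraph n).dist (inr i) (inr j) ≠ 1 := by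
    intro hc
    exact (SimpleGraph.dist_eq_one_iff_adj.mp hc)
  omega

lemma mg_dist_lr_eq (hn : 3 ≤ n) (i : Fin n) :
    (matchGraph n).dist (inl i) (inr i) = 3 := by
  have hex : ∃ j : Fin n, j ≠ i := by
    obtain ⟨k, hk, _⟩ := exists_third hn i i; exact ⟨k, hk⟩
  obtain ⟨j, hj⟩ := hex
  obtain ⟨k, hki, hkj⟩ := exists_third hn i j
  let p : (matchGraph n).Walk (inl i) (inr i) :=
    .cons (mg_adj_lr (Ne.symm hj)) (.cons (mg_adj_rl hkj) (.cons (mg_adj_lr hki) .nil))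
  have hle : (matchGraph n).dist (inl i) (inr i) ≤ 3 := by simpa [p] using SimpleGraph.dist_le p
  have h0 : (matchGraph n).dist (inl i) (inr i) ≠ 0 :=
    SimpleGraph.dist_ne_zero_iff_ne_and_reachable.mpr ⟨by simp, ⟨p⟩⟩
  obtain ⟨q, hq⟩ := SimpleGraph.exists_walk_of_dist_ne_zero h0
  have hpar := mg_walk_par q
  rw [hq] at hpar
  have hodd : ((matchGraph n).dist (inl i) (inr i) : ZMod 2) = 1 := by
    rw [hpar]; simp [mgPar]
  have h1 : (matchGraph n).dist (inl i) (inr i) ≠ 1 := by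
    intro hc
    exact (SimpleGraph.dist_eq_one_iff_adj.mp hc) rfl
  have h2 : (matchGraph n).dist (inl i) (inr i) ≠ 2 := by
    intro hc; rw [hc] at hodd; simp at hodd
    exact one_ne_zero hodd.symm
  omega

lemma mg_upper (hn : 3 ≤ n) :
    (n - 1) ∈ {k | ∃ W : Set (Fin n ⊕ Fin n),
      W.Finite ∧ W.ncard = k ∧ Resolves (matchGraph n) W} := by
  have hpos : 0 < n := by omega
  set a : Fin n := ⟨n - 1, by omega⟩ with ha
  refine ⟨inl '' {i : Fin n | i ≠ a}, Set.toFinite _, ?_, ?_⟩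
  · rw [Set.ncard_image_of_injective _ inl_injective]
    have : {i : Fin n | i ≠ a} = ↑(({a} : Finset (Fin n))ᶜ) := by
      ext x; simp
    rw [this, Set.ncard_coe_finset, Finset.card_compl, Finset.card_singleton,
      Fintype.card_fin]
  · rintro (i | i) (j | j) h
    · by_contra hne
      have hij : i ≠ j := fun hc => hne (by rw [hc])
      rcases eq_or_ne i a with hi | hi
      · have hja : j ≠ a := by rw [← hi]; exact hij.symm
        have := h (inl j) ⟨j, hja, rfl⟩
        rw [SimpleGraph.dist_self, mg_dist_ll hn hij] at this
        omega
      · have := h (inl i) ⟨i, hi, rfl⟩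
        rw [SimpleGraph.dist_self, mg_dist_ll hn hij.symm] at this
        omega
    · exfalso
      obtain ⟨k, hk, -⟩ := exists_third hn a a
      have := h (inl k) ⟨k, hk, rfl⟩
      rcases eq_or_ne i k with rfl | hi
      · rw [SimpleGraph.dist_self] at this
        rcases eq_or_ne j i with rfl | hj
        · rw [SimpleGraph.dist_comm, mg_dist_lr_eq hn] at this; omega
        · rw [SimpleGraph.dist_comm, mg_dist_lr hj.symm] at this; omega
      · rw [mg_dist_ll hn hi] at this
        rcases eq_or_ne j k with rfl | hj
        · rw [SimpleGraph.dist_comm, mg_dist_lr_eq hn] at this; omega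
        · rw [SimpleGraph.dist_comm, mg_dist_lr hj.symm] at this; omega
    · exfalso
      obtain ⟨k, hk, -⟩ := exists_third hn a a
      have := h (inl k) ⟨k, hk, rfl⟩
      rcases eq_or_ne j k with rfl | hj
      · rw [SimpleGraph.dist_self] at this
        rcases eq_or_ne i j with rfl | hi
        · rw [SimpleGraph.dist_comm, mg_dist_lr_eq hn] at this; omega
        · rw [SimpleGraph.dist_comm, mg_dist_lr hi.symm] at this; omega
      · rw [mg_dist_ll hn hj] at this
        rcases eq_or_ne i k with rfl | hi
        · rw [SimpleGraph.dist_comm, mg_dist_lr_eq hn] at this; omega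
        · rw [SimpleGraph.dist_comm, mg_dist_lr hi.symm] at this; omega
    · by_contra hne
      have hij : i ≠ j := fun hc => hne (by rw [hc])
      rcases eq_or_ne i a with hi | hi
      · have hja : j ≠ a := by rw [← hi]; exact hij.symm
        have := h (inl j) ⟨j, hja, rfl⟩
        rw [SimpleGraph.dist_comm (u := inr i) (v := inl j),
          mg_dist_lr hij.symm, SimpleGraph.dist_comm, mg_dist_lr_eq hn] at this
        omega
      · have := h (inl i) ⟨i, hi, rfl⟩
        rw [SimpleGraph.dist_comm (u := inr i) (v := inl i), mg_dist_lr_eq hn,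
          SimpleGraph.dist_comm, mg_dist_lr hij] at this
        omega

lemma mg_lower (hn : 3 ≤ n) :
    ∀ k ∈ {k | ∃ W : Set (Fin n ⊕ Fin n),
      W.Finite ∧ W.ncard = k ∧ Resolves (matchGraph n) W}, n - 1 ≤ k := by
  rintro k ⟨W, hfin, hcard, hres⟩
  by_contra hlt
  push_neg at hlt
  set S : Finset (Fin n) := hfin.toFinset.image (Sum.elim id id) with hS
  have hScard : S.card ≤ k := by
    calc S.card ≤ hfin.toFinset.card := Finset.card_image_le
    _ = W.ncard := (Set.ncard_eq_toFinset_card W hfin).symm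
    _ = k := hcard
  have h2 : 1 < Sᶜ.card := by
    rw [Finset.card_compl, Fintype.card_fin]
    omega
  obtain ⟨i, hi, j, hj, hij⟩ := Finset.one_lt_card.mp h2
  rw [Finset.mem_compl] at hi hj
  have : (inl i : Fin n ⊕ Fin n) = inl j := by
    apply hres
    intro w hw
    have hwS : Sum.elim id id w ∈ S := Finset.mem_image_of_mem _ (hfin.mem_toFinset.mpr hw)
    cases w with
    | inl m =>
      have hmi : m ≠ i := fun hc => hi (hc ▸ hwS)
      have hmj : m ≠ j := fun hc => hj (hc ▸ hwS)
      rw [mg_dist_ll hn hmi.symm, mg_dist_ll hn hmj.symm]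
    | inr m =>
      have hmi : m ≠ i := fun hc => hi (hc ▸ hwS)
      have hmj : m ≠ j := fun hc => hj (hc ▸ hwS)
      rw [mg_dist_lr hmi.symm, mg_dist_lr hmj.symm]
  exact hij (inl_injective this)


end MGaux

/-- for `n ≥ 3`, the metric dimension of `K_{n,n}` minus a
perfect matching equals `n - 1`. -/
theorem stmt0 (n : ℕ) (hn : 3 ≤ n) : metricDim (matchGraph n) = n - 1 := by
  refine le_antisymm (Nat.sInf_le (mg_upper hn)) ?_
  exact le_csInf ⟨n - 1, mg_upper hn⟩ (mg_lower hn)
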